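/- arXiv:1307.8425 — 8 statements merged into one kernel-verified Lean document; each statement's English description precedes it below -/
import Mathlib

section
/- For real α with cos(α) < 1 and any integer r > 2/(1 − cos(α)), the polynomial (x² − 2cos(α)·x + 1)·(1 + x)^r has all coefficients nonnegative. -/
open Polynomial

/-- Key numeric inequality: for `1 ≤ J ≤ R` and `R - c*R > 2`,
`J(J+1) + (R-J)(R+1-J) - 2c(R+1-J)(J+1) ≥ 0`. -/
lemma key_numeric (R J c : ℝ) (hJ1 : 1 ≤ J) (hJR : J ≤ R) (hc : 2 < R - c * R) :
    0 ≤ J * (J + 1) + (R - J) * (R + 1 - J) - 2 * c * ((R + 1 - J) * (J + 1)) := by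
  have hR1 : (1 : ℝ) ≤ R := le_trans hJ1 hJR
  have h1 : 0 ≤ (R - 1) * (2 * J - R) ^ 2 :=
    mul_nonneg (by linarith) (sq_nonneg _)
  have h2 : 0 ≤ (R + 1 - J) * (J + 1) :=
    mul_nonneg (by linarith) (by linarith)
  nlinarith [h1, h2, mul_nonneg h2 (le_of_lt (by linarith : (0:ℝ) < R - c*R - 2)), sq_nonneg (2*J - R)]

/-- Ratio lemma: from the binomial recurrences, `A - 2cB + D ≥ 0`. -/
lemma ratio_lemma (R J c A B D : ℝ) (hB : 0 ≤ B) (hJ1 : 1 ≤ J) (hJR : J ≤ R)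
    (h1 : B * J = A * (R + 1 - J)) (h2 : D * (J + 1) = B * (R - J))
    (hc : 2 < R - c * R) :
    0 ≤ A - 2 * c * B + D := by
  have key := key_numeric R J c hJ1 hJR hc
  have heq : (A - 2 * c * B + D) * ((R + 1 - J) * (J + 1))
      = B * (J * (J + 1) + (R - J) * (R + 1 - J) - 2 * c * ((R + 1 - J) * (J + 1))) := by
    linear_combination -(J + 1) * h1 + (R + 1 - J) * h2
  have hpos : 0 < (R + 1 - J) * (J + 1) := by
    have : 1 ≤ R := le_trans hJ1 hJR
    nlinarith
  nlinarith [mul_nonneg hB key, heq, hpos]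

theorem F_alpha_times_power_nonneg_coeffs (α : ℝ) (hα : Real.cos α < 1)
    (r : ℕ) (hr : (r : ℝ) > 2 / (1 - Real.cos α)) (k : ℕ) :
    0 ≤ (((X : ℝ[X]) ^ 2 - C (2 * Real.cos α) * X + 1) * (1 + X) ^ r).coeff k := by
  set c := Real.cos α with hc
  have h1c : 0 < 1 - c := by linarith
  have hrc : 2 < (r : ℝ) - c * r := by
    have := (div_lt_iff₀ h1c).mp hr
    nlinarith
  have hcm1 : -1 ≤ c := Real.neg_one_le_cos α
  set q : ℝ[X] := (1 + X) ^ r with hq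
  have hexp : ((X : ℝ[X]) ^ 2 - C (2 * c) * X + 1) * q
      = X ^ 2 * q - C (2 * c) * (X * q) + q := by ring
  rw [hexp]
  simp only [coeff_add, coeff_sub, coeff_C_mul]
  have hqk : ∀ m, q.coeff m = (r.choose m : ℝ) := fun m => coeff_one_add_X_pow ℝ r m
  match k with
  | 0 =>
    simp [mul_coeff_zero, hqk 0]
  | 1 =>
    have e1 : ((X : ℝ[X]) ^ 2 * q).coeff 1 = 0 := by
      have : ((X : ℝ[X]) ^ 2 * q) = X * (X * q) := by ring
      rw [this, coeff_X_mul, mul_coeff_zero]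
      simp
    have e2 : ((X : ℝ[X]) * q).coeff 1 = q.coeff 0 := coeff_X_mul q 0
    rw [e1, e2, hqk 0, hqk 1]
    have hr3 : (0:ℝ) < (r:ℝ) - 2 * c := by nlinarith
    simp only [Nat.choose_zero_right, Nat.choose_one_right]
    push_cast
    linarith
  | (j + 2) =>
    have e1 : ((X : ℝ[X]) ^ 2 * q).coeff (j + 2) = q.coeff j := coeff_X_pow_mul q 2 j
    have e2 : ((X : ℝ[X]) * q).coeff (j + 2) = q.coeff (j + 1) := coeff_X_mul q (j + 1)
    rw [e1, e2, hqk j, hqk (j + 1), hqk (j + 2)]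
    by_cases hjr : j + 1 ≤ r
    · -- main case: use the ratio lemma with J = j + 1
      have hb : 0 < r.choose (j + 1) := Nat.choose_pos hjr
      have id1 : (r.choose (j+1) : ℝ) * (j + 1) = (r.choose j : ℝ) * ((r:ℝ) - j) := by
        have := Nat.choose_succ_right_eq r j
        have hjr' : j ≤ r := le_trans (Nat.le_succ j) hjr
        have : ((r.choose (j+1) * (j+1) : ℕ) : ℝ) = ((r.choose j * (r - j) : ℕ) : ℝ) := by
          exact_mod_cast congrArg (Nat.cast (R := ℝ)) this
        push_cast [Nat.cast_sub hjr'] at this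
        linarith
      have id2 : (r.choose (j+2) : ℝ) * (j + 2) = (r.choose (j+1) : ℝ) * ((r:ℝ) - (j+1)) := by
        have := Nat.choose_succ_right_eq r (j+1)
        have : ((r.choose (j+2) * (j+2) : ℕ) : ℝ) = ((r.choose (j+1) * (r - (j+1)) : ℕ) : ℝ) := by
          exact_mod_cast congrArg (Nat.cast (R := ℝ)) this
        push_cast [Nat.cast_sub hjr] at this
        linarith
      have := ratio_lemma (r : ℝ) ((j : ℝ) + 1) c (r.choose j : ℝ) (r.choose (j+1) : ℝ)
          (r.choose (j+2) : ℝ) (by positivity) (by linarith [show (0:ℝ) ≤ (j:ℝ) from Nat.cast_nonneg j])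
          (by exact_mod_cast hjr)
          (by push_cast; linarith [id1]) (by push_cast; linarith [id2]) hrc
      linarith
    · -- j + 1 > r : middle binomial is zero
      have h0 : r.choose (j + 1) = 0 := Nat.choose_eq_zero_of_lt (by omega)
      rw [h0]
      have : (0:ℝ) ≤ (r.choose j : ℝ) := by positivity
      have : (0:ℝ) ≤ (r.choose (j+2) : ℝ) := by positivity
      push_cast
      linarith
end

section
/- For every integer r ≥ 0 and every integer k with 0 ≤ k ≤ r, one has C(r, k+1) + C(r, k−1) ≥ (2r/(r+2))·C(r, k), where C(n,m) denotes the binomial coefficient (with the convention C(r,−1) = C(r,r+1) = 0). -/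
theorem binomial_coefficient_inequality (r k : ℕ) (hk : k ≤ r) :
    ((r.choose (k + 1) : ℝ) + (if k = 0 then 0 else (r.choose (k - 1) : ℝ)))
      ≥ (2 * r / (r + 2)) * (r.choose k : ℝ) := by
  have hr2 : (0:ℝ) < (r:ℝ) + 2 := by positivity
  rcases Nat.eq_zero_or_pos k with hk0 | hk1
  · subst hk0
    norm_num [Nat.choose_one_right]
    rw [div_le_iff₀ hr2]
    nlinarith [Nat.cast_nonneg (α := ℝ) r]
  · have hkne : k ≠ 0 := Nat.pos_iff_ne_zero.mp hk1
    rw [if_neg hkne]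
    -- identities
    have h1 : r.choose (k + 1) * (k + 1) = r.choose k * (r - k) :=
      Nat.choose_succ_right_eq r k
    have h2 : r.choose k * k = r.choose (k - 1) * (r - (k - 1)) := by
      have := Nat.choose_succ_right_eq r (k - 1)
      rw [Nat.sub_add_cancel hk1] at this
      exact this
    have hA : ((r.choose (k+1) : ℝ)) * (k + 1) = (r.choose k : ℝ) * ((r:ℝ) - k) := by
      have := congrArg (Nat.cast (R := ℝ)) h1
      push_cast [Nat.cast_sub hk] at this
      linarith [this]
    have hB : ((r.choose k : ℝ)) * k = (r.choose (k-1) : ℝ) * ((r:ℝ) - k + 1) := by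
      have hk1' : k - 1 ≤ r := le_trans (Nat.sub_le k 1) hk
      have : ((r.choose k * k : ℕ) : ℝ) = ((r.choose (k - 1) * (r - (k - 1)) : ℕ) : ℝ) := by
        exact_mod_cast congrArg (Nat.cast (R := ℝ)) h2
      push_cast [Nat.cast_sub hk1', Nat.cast_sub (Nat.one_le_iff_ne_zero.mpr hkne)] at this
      linarith [this]
    set A := (r.choose (k+1) : ℝ)
    set B := (r.choose (k-1) : ℝ)
    set C := (r.choose k : ℝ)
    have hApos : 0 ≤ A := Nat.cast_nonneg _
    have hBpos : 0 ≤ B := Nat.cast_nonneg _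
    have hCpos : 0 ≤ C := Nat.cast_nonneg _
    have hkr : (k:ℝ) ≤ r := Nat.cast_le.mpr hk
    have hk0' : (1:ℝ) ≤ k := by exact_mod_cast hk1
    rw [ge_iff_le, div_mul_eq_mul_div, div_le_iff₀ hr2]
    -- goal: 2 * r * C ≤ (A + B) * (r + 2)
    have key : (0:ℝ) ≤ ((r:ℝ)+1) * ((r:ℝ) - 2*k)^2 * C := by positivity
    have hd1 : (0:ℝ) < (k:ℝ) + 1 := by linarith
    have hd2 : (0:ℝ) < (r:ℝ) - k + 1 := by linarith
    nlinarith [mul_le_mul_of_nonneg_left hA.le (le_of_lt hd2),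
      mul_pos hd1 hd2, sq_nonneg ((r:ℝ) - 2*k),
      mul_nonneg (mul_nonneg (sq_nonneg ((r:ℝ)-2*k)) hCpos) (le_of_lt hr2),
      mul_le_mul_of_nonneg_left hB.le (le_of_lt hd1)]
end

section
/- Let N be a positive integer and 0 < α < π/(N+2). Suppose P and Q are polynomials in one variable with nonnegative real coefficients, Q ≠ 0, and P(x) = (x² − 2cos(α)x + 1)·Q(x) as polynomials. Then deg(Q) > N. -/
open Polynomial

theorem denominator_degree_bound (N : ℕ) (hN : 0 < N) (α : ℝ)
    (hα0 : 0 < α) (hα : α < Real.pi / (N + 2))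
    (P Q : ℝ[X])
    (hP : ∀ k, 0 ≤ P.coeff k) (hQ : ∀ k, 0 ≤ Q.coeff k) (hQ0 : Q ≠ 0)
    (hPQ : P = ((X : ℝ[X]) ^ 2 - C (2 * Real.cos α) * X + 1) * Q) :
    Q.natDegree > N := by
  by_contra hle
  push_neg at hle
  set F : ℝ[X] := (X : ℝ[X]) ^ 2 - C (2 * Real.cos α) * X + 1 with hF
  have hF2 : F.coeff 2 = 1 := by
    simp [hF, coeff_one]
  have hFne : F ≠ 0 := fun h => by simp [h] at hF2
  have hFdeg : F.natDegree = 2 := by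
    have h1 : F.natDegree ≤ 2 := by
      rw [hF]
      compute_degree
    have h2 : 2 ≤ F.natDegree := le_natDegree_of_ne_zero (by rw [hF2]; exact one_ne_zero)
    omega
  have hPne : P ≠ 0 := by rw [hPQ]; exact mul_ne_zero hFne hQ0
  have hd : P.natDegree = Q.natDegree + 2 := by
    rw [hPQ, natDegree_mul hFne hQ0, hFdeg]; ring
  set d := P.natDegree with hdd
  have hNpos : (0 : ℝ) < (N : ℝ) + 2 := by positivity
  have hαπ : ((N : ℝ) + 2) * α < Real.pi := by
    rw [← lt_div_iff₀' hNpos]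
    exact hα
  set z : ℂ := Complex.exp (α * Complex.I) with hz
  have hzF : (aeval z) F = 0 := by
    rw [hF]
    simp only [map_add, map_sub, map_mul, map_pow, aeval_X, aeval_C, map_one]
    rw [hz, Complex.exp_mul_I]
    rw [show ((algebraMap ℝ ℂ) 2 * (algebraMap ℝ ℂ) (Real.cos α)) = 2 * Complex.cos (α : ℂ) by
      simp [Complex.ofReal_cos]]
    linear_combination (Complex.sin (α : ℂ)) ^ 2 * Complex.I_sq -
      Complex.sin_sq_add_cos_sq (α : ℂ)
  have hPz : (aeval z) P = 0 := by
    rw [hPQ, map_mul, hzF, zero_mul]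
  have hzk : ∀ k : ℕ, (z ^ k).im = Real.sin (k * α) := by
    intro k
    rw [hz, ← Complex.exp_nat_mul]
    have h : (k : ℂ) * ((α : ℂ) * Complex.I) = ((k : ℝ) * α : ℝ) * Complex.I := by
      push_cast; ring
    rw [h, Complex.exp_ofReal_mul_I_im]
  have hsum0 : ∑ k ∈ Finset.range (d + 1), P.coeff k * Real.sin (k * α) = 0 := by
    have h1 : (aeval z) P = ∑ k ∈ Finset.range (d + 1), P.coeff k • z ^ k :=
      aeval_eq_sum_range z
    have h2 := congrArg Complex.im h1
    rw [hPz, Complex.im_sum] at h2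
    have h3 : ∀ k ∈ Finset.range (d + 1),
        (P.coeff k • z ^ k).im = P.coeff k * Real.sin (k * α) := by
      intro k _
      rw [Complex.real_smul, Complex.mul_im]; simp [hzk]
    rw [Finset.sum_congr rfl h3] at h2
    exact h2.symm
  have hkle : ∀ k : ℕ, k ≤ d → (k : ℝ) * α ≤ ((N : ℝ) + 2) * α := by
    intro k hk
    apply mul_le_mul_of_nonneg_right _ hα0.le
    have hkN : k ≤ N + 2 := by omega
    exact_mod_cast hkN
  have hterm : ∀ k ∈ Finset.range (d + 1), 0 ≤ P.coeff k * Real.sin (k * α) := by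
    intro k hk
    apply mul_nonneg (hP k)
    apply Real.sin_nonneg_of_nonneg_of_le_pi
    · positivity
    · have hk' := Finset.mem_range.mp hk
      exact le_trans (hkle k (by omega)) hαπ.le
  have hall := (Finset.sum_eq_zero_iff_of_nonneg hterm).mp hsum0
  have hdmem : d ∈ Finset.range (d + 1) := Finset.mem_range.mpr (Nat.lt_succ_self d)
  have hzero := hall d hdmem
  have hcoef : 0 < P.coeff d := lt_of_le_of_ne (hP d)
    (Ne.symm (leadingCoeff_ne_zero.mpr hPne))
  have hsin : 0 < Real.sin (d * α) := by
    apply Real.sin_pos_of_pos_of_lt_pi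
    · have : (1 : ℝ) ≤ (d : ℝ) := by exact_mod_cast Nat.one_le_iff_ne_zero.mpr (by omega)
      nlinarith
    · exact lt_of_le_of_lt (hkle d le_rfl) hαπ
  exact absurd hzero (ne_of_gt (mul_pos hcoef hsin))
end

section
/- Let Q(x) = Σ_{k=0}^{N} q_k x^k be a polynomial with nonnegative coefficients, q_0 > 0, and let 0 < α < π/(N+2). If for all k (with q_k = 0 for k < 0 or k > N) one has q_k − 2cos(α)q_{k−1} + q_{k−2} ≥ 0, then for every m ∈ {1, …, N+1}, q_m ≥ (sin((m+1)α)/sin(mα))·q_{m−1}; in particular q_{N+1} > 0, a contradiction, so no such Q of degree ≤ N exists. -/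
theorem no_low_degree_denominator (N : ℕ) (hN : 0 < N) (α : ℝ)
    (hα0 : 0 < α) (hα : α < Real.pi / (N + 2))
    (q : ℤ → ℝ)
    (hnonneg : ∀ k, 0 ≤ q k)
    (h0 : 0 < q 0)
    (hneg : ∀ k : ℤ, k < 0 → q k = 0)
    (hbig : ∀ k : ℤ, (N : ℤ) < k → q k = 0)
    (hconv : ∀ k : ℤ, q k - 2 * Real.cos α * q (k - 1) + q (k - 2) ≥ 0) :
    (∀ m : ℤ, 1 ≤ m → m ≤ (N : ℤ) + 1 →
      q m ≥ (Real.sin (((m : ℝ) + 1) * α) / Real.sin ((m : ℝ) * α)) * q (m - 1))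
    ∧ False := by
  have hN2 : (0:ℝ) < (N:ℝ) + 2 := by positivity
  have hπ : ((N:ℝ) + 2) * α < Real.pi := by
    rw [lt_div_iff₀ hN2] at hα
    nlinarith
  have sinpos : ∀ x : ℝ, 1 ≤ x → x ≤ (N:ℝ) + 2 → 0 < Real.sin (x * α) := by
    intro x h1 h2
    apply Real.sin_pos_of_pos_of_lt_pi
    · nlinarith
    · nlinarith
  have key : ∀ n : ℕ, (n : ℤ) + 1 ≤ (N:ℤ) + 1 →
      q ((n:ℤ) + 1) ≥ (Real.sin (((n:ℝ) + 2) * α) / Real.sin (((n:ℝ) + 1) * α)) * q (n:ℤ) := by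
    intro n
    induction n with
    | zero =>
      intro _
      have h1 := hconv 1
      have hm1 : q (1 - 2) = 0 := by
        rw [show (1:ℤ) - 2 = -1 by norm_num]; exact hneg (-1) (by norm_num)
      rw [hm1] at h1
      have s1 : 0 < Real.sin (1 * α) := sinpos 1 le_rfl (by linarith [Nat.cast_nonneg (α := ℝ) N])
      have hs : Real.sin α ≠ 0 := by rw [one_mul] at s1; exact ne_of_gt s1
      have hratio2 : Real.sin ((((0:ℕ):ℝ) + 2) * α) / Real.sin ((((0:ℕ):ℝ) + 1) * α) = 2 * Real.cos α := by
        push_cast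
        rw [show ((0:ℝ) + 2) * α = 2 * α by ring, Real.sin_two_mul]
        rw [show ((0:ℝ) + 1) * α = 1 * α by ring, one_mul]
        field_simp
      rw [hratio2]
      push_cast
      have h10 : (1:ℤ) - 1 = 0 := by norm_num
      rw [h10] at h1
      norm_num at h1 ⊢
      linarith
    | succ n ih =>
      intro hle
      have hle' : (n:ℤ) + 1 ≤ (N:ℤ) + 1 := by push_cast at hle ⊢; omega
      have IH := ih hle'
      have hnR : ((n:ℝ) + 2) ≤ (N:ℝ) + 1 := by
        push_cast at hle
        exact_mod_cast by linarith
      have s1 : 0 < Real.sin (((n:ℝ) + 1) * α) := sinpos _ (by linarith [Nat.cast_nonneg (α := ℝ) n]) (by linarith)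
      have s2 : 0 < Real.sin (((n:ℝ) + 2) * α) := sinpos _ (by linarith [Nat.cast_nonneg (α := ℝ) n]) (by linarith)
      have s3 : 0 < Real.sin (((n:ℝ) + 3) * α) := sinpos _ (by linarith [Nat.cast_nonneg (α := ℝ) n]) (by linarith)
      have hid : Real.sin (((n:ℝ) + 3) * α)
          = 2 * Real.cos α * Real.sin (((n:ℝ) + 2) * α) - Real.sin (((n:ℝ) + 1) * α) := by
        rw [show ((n:ℝ) + 3) * α = ((n:ℝ) + 2) * α + α by ring,
            show ((n:ℝ) + 1) * α = ((n:ℝ) + 2) * α - α by ring,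
            Real.sin_add, Real.sin_sub]
        ring
      have hc := hconv ((n:ℤ) + 2)
      have e1 : (n:ℤ) + 2 - 1 = (n:ℤ) + 1 := by ring
      have e2 : (n:ℤ) + 2 - 2 = (n:ℤ) := by ring
      rw [e1, e2] at hc
      -- from IH : q(n+1) ≥ (s2/s1) q n, get s2 * q n ≤ s1 * q (n+1)
      have hIH' : Real.sin (((n:ℝ) + 2) * α) * q (n:ℤ)
          ≤ Real.sin (((n:ℝ) + 1) * α) * q ((n:ℤ) + 1) := by
        rw [ge_iff_le, div_mul_eq_mul_div, div_le_iff₀ s1] at IH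
        linarith
      -- goal
      have hcast1 : (((n+1:ℕ):ℝ) + 2) = (n:ℝ) + 3 := by push_cast; ring
      have hcast2 : (((n+1:ℕ):ℝ) + 1) = (n:ℝ) + 2 := by push_cast; ring
      have hcast3 : (((n+1:ℕ):ℤ) + 1) = (n:ℤ) + 2 := by push_cast; ring
      have hcast4 : (((n+1:ℕ):ℤ)) = (n:ℤ) + 1 := by push_cast; ring
      rw [hcast1, hcast2, hcast3, hcast4, ge_iff_le, div_mul_eq_mul_div, div_le_iff₀ s2, hid]
      nlinarith [mul_nonneg s2.le hc, hnonneg ((n:ℤ)+1)]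
  have posq : ∀ n : ℕ, (n:ℤ) ≤ (N:ℤ) + 1 → 0 < q (n:ℤ) := by
    intro n
    induction n with
    | zero => intro _; exact_mod_cast h0
    | succ n ih =>
      intro hle
      have hle' : (n:ℤ) ≤ (N:ℤ) + 1 := by omega
      have hq := key n (by omega)
      have s1 : 0 < Real.sin (((n:ℝ) + 1) * α) := by
        apply sinpos _ (by linarith [Nat.cast_nonneg (α := ℝ) n])
        have : (n:ℤ) + 1 ≤ (N:ℤ) + 1 := by omega
        have : (n:ℝ) + 1 ≤ (N:ℝ) + 1 := by exact_mod_cast this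
        linarith
      have s2 : 0 < Real.sin (((n:ℝ) + 2) * α) := by
        apply sinpos _ (by linarith [Nat.cast_nonneg (α := ℝ) n])
        have : (n:ℤ) + 1 ≤ (N:ℤ) + 1 := by omega
        have : (n:ℝ) + 1 ≤ (N:ℝ) + 1 := by exact_mod_cast this
        linarith
      have := ih hle'
      have hcast4 : (((n+1:ℕ):ℤ)) = (n:ℤ) + 1 := by push_cast; ring
      rw [hcast4]
      calc (0:ℝ) < (Real.sin (((n:ℝ) + 2) * α) / Real.sin (((n:ℝ) + 1) * α)) * q (n:ℤ) := by positivity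
        _ ≤ q ((n:ℤ) + 1) := hq
  constructor
  · intro m h1 h2
    have hmn : ((m - 1).toNat : ℤ) = m - 1 := Int.toNat_of_nonneg (by omega)
    have hk := key (m - 1).toNat (by omega)
    have hcastR : (((m - 1).toNat : ℝ)) = (m:ℝ) - 1 := by exact_mod_cast congrArg (Int.cast : ℤ → ℝ) hmn
    rw [hmn] at hk
    rw [hcastR] at hk
    have e1 : m - 1 + 1 = m := by ring
    rw [e1] at hk
    have e2 : ((m:ℝ) - 1 + 2) = (m:ℝ) + 1 := by ring
    have e3 : ((m:ℝ) - 1 + 1) = (m:ℝ) := by ring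
    rw [e2, e3] at hk
    exact hk
  · have hz : q (((N+1:ℕ)):ℤ) = 0 := by
      apply hbig
      push_cast
      omega
    have := posq (N+1) (by push_cast; omega)
    rw [hz] at this
    exact lt_irrefl 0 this
end

section
/- Let F(x) be a rational function representable as a ratio of polynomials with nonnegative coefficients, and suppose every such representation F = P/Q has deg(Q) > 2^m. Then every subtraction-free arithmetic circuit computing F has more than m gates. -/
open Polynomial

/-- An input of a subtraction-free circuit: the variable `x` or a positive scalar. -/
def SFInput (f : RatFunc ℝ) : Prop :=
  f = RatFunc.X ∨ ∃ c : ℝ, 0 < c ∧ f = RatFunc.C c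

/-- `g 0, g 1, …, g (h-1)` are the values of the gates of a subtraction-free
arithmetic circuit with `h` gates. -/
def IsSFCircuit (h : ℕ) (g : ℕ → RatFunc ℝ) : Prop :=
  ∀ i < h, ∃ a b : RatFunc ℝ,
    (SFInput a ∨ ∃ j < i, a = g j) ∧
    (SFInput b ∨ ∃ j < i, b = g j) ∧
    (g i = a + b ∨ g i = a * b ∨ g i = a / b)

/-- The circuit computes `F` if `F` is an input or the value of some gate. -/
def Computes (h : ℕ) (g : ℕ → RatFunc ℝ) (F : RatFunc ℝ) : Prop :=
  SFInput F ∨ ∃ i < h, F = g i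

def NN (P : ℝ[X]) : Prop := ∀ n, 0 ≤ P.coeff n

lemma NN.add' {P Q : ℝ[X]} (hP : NN P) (hQ : NN Q) : NN (P + Q) := fun n => by
  simp only [coeff_add]; exact add_nonneg (hP n) (hQ n)

lemma NN.mul' {P Q : ℝ[X]} (hP : NN P) (hQ : NN Q) : NN (P * Q) := fun n => by
  rw [coeff_mul]; exact Finset.sum_nonneg fun x _ => mul_nonneg (hP _) (hQ _)

def D (k : ℕ) (f : RatFunc ℝ) : Prop :=
  ∃ P Q : ℝ[X], NN P ∧ NN Q ∧ Q ≠ 0 ∧ P.natDegree ≤ 2 ^ k ∧ Q.natDegree ≤ 2 ^ k ∧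
    f = algebraMap ℝ[X] (RatFunc ℝ) P / algebraMap ℝ[X] (RatFunc ℝ) Q

lemma D_mono {k l : ℕ} (hkl : k ≤ l) {f : RatFunc ℝ} (hf : D k f) : D l f := by
  obtain ⟨P, Q, h1, h2, h3, h4, h5, h6⟩ := hf
  exact ⟨P, Q, h1, h2, h3, h4.trans (Nat.pow_le_pow_right (by norm_num) hkl),
    h5.trans (Nat.pow_le_pow_right (by norm_num) hkl), h6⟩

lemma D_input {f : RatFunc ℝ} (hf : SFInput f) (k : ℕ) : D k f := by
  apply D_mono (Nat.zero_le k)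
  rcases hf with h | ⟨c, hc, h⟩
  · refine ⟨X, 1, ?_, ?_, one_ne_zero, by simp, by simp, ?_⟩
    · intro n; rw [coeff_X]; split <;> norm_num
    · intro n; rw [coeff_one]; split <;> norm_num
    · simp [h, RatFunc.algebraMap_X]
  · refine ⟨Polynomial.C c, 1, ?_, ?_, one_ne_zero, by simp, by simp, ?_⟩
    · intro n; rw [coeff_C]; split <;> [exact hc.le; rfl]
    · intro n; rw [coeff_one]; split <;> norm_num
    · simp [h, RatFunc.algebraMap_C]

lemma D_op {k : ℕ} {a b f : RatFunc ℝ} (ha : D k a) (hb : D k b)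
    (hf : f = a + b ∨ f = a * b ∨ f = a / b) : D (k + 1) f := by
  obtain ⟨P1, Q1, hP1, hQ1, hQ1z, hP1d, hQ1d, rfl⟩ := ha
  obtain ⟨P2, Q2, hP2, hQ2, hQ2z, hP2d, hQ2d, rfl⟩ := hb
  have hq1 : algebraMap ℝ[X] (RatFunc ℝ) Q1 ≠ 0 := RatFunc.algebraMap_ne_zero hQ1z
  have hq2 : algebraMap ℝ[X] (RatFunc ℝ) Q2 ≠ 0 := RatFunc.algebraMap_ne_zero hQ2z
  have pow : 2 ^ k + 2 ^ k = 2 ^ (k + 1) := by ring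
  rcases hf with rfl | rfl | rfl
  · refine ⟨P1 * Q2 + P2 * Q1, Q1 * Q2, (hP1.mul' hQ2).add' (hP2.mul' hQ1),
      hQ1.mul' hQ2, mul_ne_zero hQ1z hQ2z, ?_, ?_, ?_⟩
    · exact natDegree_add_le_of_degree_le
        ((natDegree_mul_le).trans (by omega)) ((natDegree_mul_le).trans (by omega))
    · exact (natDegree_mul_le).trans (by omega)
    · rw [div_add_div _ _ hq1 hq2]; push_cast [map_add, map_mul]; ring_nf
  · refine ⟨P1 * P2, Q1 * Q2, hP1.mul' hP2, hQ1.mul' hQ2, mul_ne_zero hQ1z hQ2z,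
      (natDegree_mul_le).trans (by omega), (natDegree_mul_le).trans (by omega), ?_⟩
    rw [div_mul_div_comm]; push_cast [map_mul]; ring_nf
  · by_cases hP2z : P2 = 0
    · refine ⟨0, 1, fun n => by simp, fun n => by simp [coeff_one]; split <;> norm_num,
        one_ne_zero, by simp, by simp, ?_⟩
      simp [hP2z]
    · refine ⟨P1 * Q2, Q1 * P2, hP1.mul' hQ2, hQ1.mul' hP2, mul_ne_zero hQ1z hP2z,
        (natDegree_mul_le).trans (by omega), (natDegree_mul_le).trans (by omega), ?_⟩
      have hp2 : algebraMap ℝ[X] (RatFunc ℝ) P2 ≠ 0 := RatFunc.algebraMap_ne_zero hP2z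
      field_simp
      simp only [map_mul]; ring

lemma gate_D {h : ℕ} {g : ℕ → RatFunc ℝ} (hc : IsSFCircuit h g) :
    ∀ i, i < h → D (i + 1) (g i) := by
  intro i
  induction i using Nat.strong_induction_on with
  | _ i ih =>
    intro hi
    obtain ⟨a, b, ha, hb, hop⟩ := hc i hi
    have Da : D i a := by
      rcases ha with ha | ⟨j, hj, rfl⟩
      · exact D_input ha i
      · exact D_mono hj (ih j hj (hj.trans hi))
    have Db : D i b := by
      rcases hb with hb | ⟨j, hj, rfl⟩
      · exact D_input hb i
      · exact D_mono hj (ih j hj (hj.trans hi))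
    exact D_op Da Db hop

theorem denominator_degree_lower_bound_implies_complexity (F : RatFunc ℝ) (m : ℕ)
    (hrep : ∃ P Q : ℝ[X], (∀ n, 0 ≤ P.coeff n) ∧ (∀ n, 0 ≤ Q.coeff n) ∧ Q ≠ 0 ∧
      F = algebraMap ℝ[X] (RatFunc ℝ) P / algebraMap ℝ[X] (RatFunc ℝ) Q)
    (hbound : ∀ P Q : ℝ[X], (∀ n, 0 ≤ P.coeff n) → (∀ n, 0 ≤ Q.coeff n) → Q ≠ 0 →
      F = algebraMap ℝ[X] (RatFunc ℝ) P / algebraMap ℝ[X] (RatFunc ℝ) Q →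
      Q.natDegree > 2 ^ m) :
    ∀ h (g : ℕ → RatFunc ℝ), IsSFCircuit h g → Computes h g F → h > m := by
  intro h g hcirc hcomp
  have : D h F := by
    rcases hcomp with hF | ⟨i, hi, rfl⟩
    · exact D_input hF h
    · exact D_mono hi (gate_D hcirc i hi)
  obtain ⟨P, Q, hP, hQ, hQz, _, hQd, hFeq⟩ := this
  have := hbound P Q hP hQ hQz hFeq
  have : 2 ^ m < 2 ^ h := lt_of_lt_of_le this hQd
  exact (Nat.pow_lt_pow_iff_right (by norm_num)).mp this
end

section
/- For the polynomial f_n(x) = x² − 2(1 − 2^{−2^n})x + 1, every subtraction-free arithmetic circuit computing f_n has size greater than c·2^n for some absolute constant c > 0 (e.g., any representation f_n = P/Q with P, Q having nonnegative coefficients forces deg Q ≥ 2^{2^n}/10). -/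
open Polynomial

/-- The polynomial `f_n(x) = x² − 2(1 − 2^{−2ⁿ})x + 1`, viewed as a rational function. -/
noncomputable def fPoly (n : ℕ) : RatFunc ℝ :=
  RatFunc.X ^ 2 - RatFunc.C (2 * (1 - (2 : ℝ) ^ (-(2 ^ n : ℤ)))) * RatFunc.X + 1

/-! ### Auxiliary machinery -/

/-- `F` can be written as a quotient of two polynomials with nonnegative
coefficients, both of degree at most `D`. -/
def NonnegRep (F : RatFunc ℝ) (D : ℕ) : Prop :=
  ∃ P Q : ℝ[X], (∀ k, 0 ≤ P.coeff k) ∧ (∀ k, 0 ≤ Q.coeff k) ∧ Q ≠ 0 ∧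
    P.natDegree ≤ D ∧ Q.natDegree ≤ D ∧
    F = algebraMap ℝ[X] (RatFunc ℝ) P / algebraMap ℝ[X] (RatFunc ℝ) Q

lemma coeff_mul_nn {p q : ℝ[X]} (hp : ∀ k, 0 ≤ p.coeff k) (hq : ∀ k, 0 ≤ q.coeff k) :
    ∀ k, 0 ≤ (p * q).coeff k := by
  intro k
  rw [Polynomial.coeff_mul]
  exact Finset.sum_nonneg fun x _ => mul_nonneg (hp x.1) (hq x.2)

lemma NonnegRep.mono {F : RatFunc ℝ} {D D' : ℕ} (h : NonnegRep F D) (hD : D ≤ D') :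
    NonnegRep F D' := by
  obtain ⟨P, Q, h1, h2, h3, h4, h5, h6⟩ := h
  exact ⟨P, Q, h1, h2, h3, h4.trans hD, h5.trans hD, h6⟩

lemma NonnegRep.input {F : RatFunc ℝ} (h : SFInput F) : NonnegRep F 1 := by
  rcases h with rfl | ⟨c, hc, rfl⟩
  · refine ⟨X, 1, ?_, ?_, one_ne_zero, natDegree_X_le, by simp, ?_⟩
    · intro k; rw [Polynomial.coeff_X]; split_ifs <;> norm_num
    · intro k; rw [Polynomial.coeff_one]; split_ifs <;> norm_num
    · rw [map_one, div_one, RatFunc.algebraMap_X]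
  · refine ⟨C c, 1, ?_, ?_, one_ne_zero, (natDegree_C c).le.trans zero_le_one, by simp, ?_⟩
    · intro k; rw [Polynomial.coeff_C]; split_ifs <;> simp [hc.le]
    · intro k; rw [Polynomial.coeff_one]; split_ifs <;> norm_num
    · rw [map_one, div_one, RatFunc.algebraMap_C]

lemma NonnegRep.add {F G : RatFunc ℝ} {D₁ D₂ : ℕ}
    (hF : NonnegRep F D₁) (hG : NonnegRep G D₂) : NonnegRep (F + G) (D₁ + D₂) := by
  obtain ⟨P₁, Q₁, hP₁, hQ₁, hQ₁0, hP₁d, hQ₁d, rfl⟩ := hF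
  obtain ⟨P₂, Q₂, hP₂, hQ₂, hQ₂0, hP₂d, hQ₂d, rfl⟩ := hG
  refine ⟨P₁ * Q₂ + Q₁ * P₂, Q₁ * Q₂, ?_, coeff_mul_nn hQ₁ hQ₂,
    mul_ne_zero hQ₁0 hQ₂0, ?_, ?_, ?_⟩
  · intro k; rw [Polynomial.coeff_add]
    exact add_nonneg (coeff_mul_nn hP₁ hQ₂ k) (coeff_mul_nn hQ₁ hP₂ k)
  · exact (natDegree_add_le _ _).trans (max_le
      (natDegree_mul_le.trans (add_le_add hP₁d hQ₂d))
      (natDegree_mul_le.trans (add_le_add hQ₁d hP₂d)))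
  · exact natDegree_mul_le.trans (add_le_add hQ₁d hQ₂d)
  · rw [div_add_div _ _ (RatFunc.algebraMap_ne_zero hQ₁0) (RatFunc.algebraMap_ne_zero hQ₂0),
      map_add, map_mul, map_mul, map_mul]

lemma NonnegRep.mul {F G : RatFunc ℝ} {D₁ D₂ : ℕ}
    (hF : NonnegRep F D₁) (hG : NonnegRep G D₂) : NonnegRep (F * G) (D₁ + D₂) := by
  obtain ⟨P₁, Q₁, hP₁, hQ₁, hQ₁0, hP₁d, hQ₁d, rfl⟩ := hF
  obtain ⟨P₂, Q₂, hP₂, hQ₂, hQ₂0, hP₂d, hQ₂d, rfl⟩ := hG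
  refine ⟨P₁ * P₂, Q₁ * Q₂, coeff_mul_nn hP₁ hP₂, coeff_mul_nn hQ₁ hQ₂,
    mul_ne_zero hQ₁0 hQ₂0, natDegree_mul_le.trans (add_le_add hP₁d hP₂d),
    natDegree_mul_le.trans (add_le_add hQ₁d hQ₂d), ?_⟩
  rw [div_mul_div_comm, map_mul, map_mul]

lemma NonnegRep.div {F G : RatFunc ℝ} {D₁ D₂ : ℕ}
    (hF : NonnegRep F D₁) (hG : NonnegRep G D₂) : NonnegRep (F / G) (D₁ + D₂) := by
  obtain ⟨P₁, Q₁, hP₁, hQ₁, hQ₁0, hP₁d, hQ₁d, rfl⟩ := hF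
  obtain ⟨P₂, Q₂, hP₂, hQ₂, hQ₂0, hP₂d, hQ₂d, rfl⟩ := hG
  by_cases hP₂0 : P₂ = 0
  · refine ⟨0, 1, by simp, ?_, one_ne_zero, by simp, by simp, ?_⟩
    · intro k; rw [Polynomial.coeff_one]; split_ifs <;> norm_num
    · subst hP₂0; simp
  · refine ⟨P₁ * Q₂, Q₁ * P₂, coeff_mul_nn hP₁ hQ₂, coeff_mul_nn hQ₁ hP₂,
      mul_ne_zero hQ₁0 hP₂0, natDegree_mul_le.trans (add_le_add hP₁d hQ₂d),
      natDegree_mul_le.trans (add_le_add hQ₁d hP₂d), ?_⟩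
    rw [map_mul, map_mul]
    have h1 := RatFunc.algebraMap_ne_zero hQ₁0
    have h2 := RatFunc.algebraMap_ne_zero hP₂0
    have h3 := RatFunc.algebraMap_ne_zero hQ₂0
    field_simp

lemma gate_rep {h : ℕ} {g : ℕ → RatFunc ℝ} (hg : IsSFCircuit h g) :
    ∀ i < h, NonnegRep (g i) (2 ^ (i + 1)) := by
  intro i
  induction i using Nat.strong_induction_on with
  | _ i ih =>
    intro hih
    obtain ⟨a, b, ha, hb, hop⟩ := hg i hih
    have hpow : ∀ j, j < i → 2 ^ (j + 1) ≤ 2 ^ i :=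
      fun j hj => Nat.pow_le_pow_right (by norm_num) hj
    have hA : NonnegRep a (2 ^ i) := by
      rcases ha with hin | ⟨j, hj, rfl⟩
      · exact (NonnegRep.input hin).mono Nat.one_le_two_pow
      · exact (ih j hj (hj.trans hih)).mono (hpow j hj)
    have hB : NonnegRep b (2 ^ i) := by
      rcases hb with hin | ⟨j, hj, rfl⟩
      · exact (NonnegRep.input hin).mono Nat.one_le_two_pow
      · exact (ih j hj (hj.trans hih)).mono (hpow j hj)
    have hsum : 2 ^ i + 2 ^ i = 2 ^ (i + 1) := by rw [pow_succ, mul_two]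
    rcases hop with h1 | h1 | h1 <;> rw [h1, ← hsum]
    · exact hA.add hB
    · exact hA.mul hB
    · exact hA.div hB

set_option maxHeartbeats 1000000 in
/-- The key quantitative lemma: any nonnegative representation of `fPoly n` with
degrees at most `D` forces `D ≥ 2` and `2^(2^n) ≤ 2 * D^2`. -/
lemma key_bound (n D : ℕ) (hrep : NonnegRep (fPoly n) D) :
    2 ≤ D ∧ (2 : ℕ) ^ (2 ^ n) ≤ 2 * D ^ 2 := by
  obtain ⟨P, Q, hP, hQ, hQ0, hPd, hQd, hF⟩ := hrep
  set ε : ℝ := (2 : ℝ) ^ (-(2 ^ n : ℤ)) with hεdef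
  have hε0 : 0 < ε := zpow_pos (by norm_num) _
  have h2n : (1 : ℤ) ≤ 2 ^ n := by
    have : (0 : ℤ) < 2 ^ n := by positivity
    omega
  have hεhalf : ε ≤ 1 / 2 := by
    have : ε ≤ (2 : ℝ) ^ (-1 : ℤ) :=
      zpow_le_zpow_right₀ (by norm_num) (by linarith)
    simpa using this
  set t : ℝ := 1 - ε with htdef
  have ht1 : t < 1 := by simp [htdef]; exact hε0
  have htm : -1 ≤ t := by rw [htdef]; linarith
  set f : ℝ[X] := X ^ 2 - C (2 * t) * X + 1 with hfdef
  -- `fPoly n` is the image of `f`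
  have hfP : fPoly n = algebraMap ℝ[X] (RatFunc ℝ) f := by
    simp only [fPoly, hfdef, htdef, map_add, map_sub, map_mul, map_pow, map_one,
      RatFunc.algebraMap_X, RatFunc.algebraMap_C]
    rfl
  have hfne : f ≠ 0 := by
    intro h0
    have := congrArg (fun p => Polynomial.coeff p 2) h0
    simp [hfdef, Polynomial.coeff_one, Polynomial.coeff_X] at this
  have hPeq : P = f * Q := by
    apply RatFunc.algebraMap_injective ℝ
    rw [map_mul, ← hfP, hF, div_mul_cancel₀ _ (RatFunc.algebraMap_ne_zero hQ0)]
  have hPne : P ≠ 0 := hPeq ▸ mul_ne_zero hfne hQ0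
  -- degree facts
  have hfdeg : f.natDegree = 2 := by
    have : f = C 1 * X ^ 2 + C (-(2 * t)) * X + C 1 := by
      rw [hfdef]; simp [map_neg]; ring
    rw [this, natDegree_quadratic (by norm_num)]
  set d : ℕ := P.natDegree with hddef
  have hd2 : 2 ≤ d := by
    rw [hddef, hPeq, natDegree_mul hfne hQ0, hfdeg]
    omega
  have hdD : d ≤ D := hPd
  refine ⟨hd2.trans hdD, ?_⟩
  -- the complex root
  set θ : ℝ := Real.arccos t with hθdef
  have hθpos : 0 < θ := Real.arccos_pos.2 ht1
  have hθpi : θ ≤ Real.pi := Real.arccos_le_pi t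
  have hcos : Real.cos θ = t := Real.cos_arccos htm ht1.le
  set s : ℝ := Real.sin θ with hsdef
  have hst : s ^ 2 + t ^ 2 = 1 := by
    rw [hsdef, ← hcos]; exact Real.sin_sq_add_cos_sq θ
  set z : ℂ := Complex.exp (θ * Complex.I) with hzdef
  have hz_eq : z = (t : ℂ) + (s : ℂ) * Complex.I := by
    rw [hzdef, Complex.exp_mul_I, ← Complex.ofReal_cos, ← Complex.ofReal_sin, hcos]
  have hzroot : z ^ 2 - ((2 * t : ℝ) : ℂ) * z + 1 = 0 := by
    rw [hz_eq]
    have h1 : (s : ℂ) ^ 2 + (t : ℂ) ^ 2 = 1 := by exact_mod_cast hst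
    push_cast
    linear_combination -h1 + (s : ℂ) ^ 2 * Complex.I_sq
  -- evaluate P at z
  have hPz : Polynomial.eval z (P.map (algebraMap ℝ ℂ)) = 0 := by
    rw [hPeq, Polynomial.map_mul, Polynomial.eval_mul]
    have : Polynomial.eval z (f.map (algebraMap ℝ ℂ)) = 0 := by
      rw [hfdef]
      simp only [Polynomial.map_add, Polynomial.map_sub, Polynomial.map_mul,
        Polynomial.map_pow, Polynomial.map_one, Polynomial.map_X, Polynomial.map_C,
        Polynomial.eval_add, Polynomial.eval_sub, Polynomial.eval_mul,
        Polynomial.eval_pow, Polynomial.eval_one, Polynomial.eval_X, Polynomial.eval_C]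
      exact hzroot
    rw [this, zero_mul]
  -- the real-part sum
  have hsum : ∑ k ∈ Finset.range (d + 1), P.coeff k * Real.cos (k * θ) = 0 := by
    have hdeg : (P.map (algebraMap ℝ ℂ)).natDegree < d + 1 :=
      Nat.lt_succ_of_le natDegree_map_le
    have heval := Polynomial.eval_eq_sum_range' hdeg z
    rw [hPz] at heval
    have h0 : (∑ i ∈ Finset.range (d + 1),
        ((P.map (algebraMap ℝ ℂ)).coeff i * z ^ i)).re = 0 := by
      rw [← heval, Complex.zero_re]
    rw [Complex.re_sum] at h0
    rw [← h0]
    apply Finset.sum_congr rfl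
    intro k _
    rw [Polynomial.coeff_map]
    have hzk : z ^ k = Complex.exp ((k * θ : ℝ) * Complex.I) := by
      rw [hzdef, ← Complex.exp_nat_mul]
      push_cast
      ring_nf
    rw [hzk]
    have : ((algebraMap ℝ ℂ) (P.coeff k) * Complex.exp ((k * θ : ℝ) * Complex.I)).re
        = P.coeff k * (Complex.exp ((k * θ : ℝ) * Complex.I)).re := by
      exact Complex.re_ofReal_mul _ _
    rw [this, Complex.exp_ofReal_mul_I_re]
  -- angle lower bound: d * θ ≥ π / 2
  have hkey : Real.pi / 2 ≤ d * θ := by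
    by_contra hlt
    push_neg at hlt
    have hterm : ∀ k ∈ Finset.range (d + 1), 0 ≤ P.coeff k * Real.cos (k * θ) := by
      intro k hk
      refine mul_nonneg (hP k) ?_
      apply le_of_lt
      apply Real.cos_pos_of_mem_Ioo
      constructor
      · have : (0 : ℝ) ≤ k * θ := by positivity
        have hπ : 0 < Real.pi := Real.pi_pos
        linarith
      · have hk' : (k : ℝ) ≤ d := by
          have := Finset.mem_range.1 hk
          exact_mod_cast Nat.lt_succ_iff.1 this
        calc (k : ℝ) * θ ≤ d * θ := by
              exact mul_le_mul_of_nonneg_right hk' hθpos.le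
          _ < Real.pi / 2 := hlt
    have hall := (Finset.sum_eq_zero_iff_of_nonneg hterm).1 hsum
    have hcoeff : P.coeff d = 0 := by
      have hd_mem : d ∈ Finset.range (d + 1) := Finset.self_mem_range_succ d
      have := hall d hd_mem
      have hcosne : Real.cos (d * θ) ≠ 0 := by
        apply ne_of_gt
        apply Real.cos_pos_of_mem_Ioo
        constructor
        · have : (0 : ℝ) ≤ d * θ := by positivity
          have hπ : 0 < Real.pi := Real.pi_pos
          linarith
        · exact hlt
      exact (mul_eq_zero.1 this).resolve_right hcosne
    exact hPne (Polynomial.leadingCoeff_eq_zero.1 hcoeff)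
  -- Jordan-type bound: sin(θ/2)² = ε/2 and sin(θ/2) ≥ θ/π
  have hsinsq : Real.sin (θ / 2) ^ 2 = ε / 2 := by
    have h1 : Real.sin (θ / 2) ^ 2 = 1 - Real.cos (θ / 2) ^ 2 := Real.sin_sq _
    have h2 : Real.cos (θ / 2) ^ 2 = 1 / 2 + Real.cos (2 * (θ / 2)) / 2 := Real.cos_sq _
    have h3 : 2 * (θ / 2) = θ := by ring
    rw [h3, hcos] at h2
    rw [h1, h2, htdef]
    ring
  have hjordan : θ / Real.pi ≤ Real.sin (θ / 2) := by
    have hπ : 0 < Real.pi := Real.pi_pos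
    have hms := Real.mul_le_sin (x := θ / 2) (by positivity) (by linarith)
    calc θ / Real.pi = 2 / Real.pi * (θ / 2) := by field_simp
      _ ≤ Real.sin (θ / 2) := hms
  have hπ : 0 < Real.pi := Real.pi_pos
  have hd0 : (0 : ℝ) < d := by
    have : (0 : ℕ) < d := by omega
    exact_mod_cast this
  have hsq : (θ / Real.pi) ^ 2 ≤ ε / 2 := by
    rw [← hsinsq]
    apply pow_le_pow_left₀ (by positivity) hjordan
  have hθsq : θ ^ 2 * 2 ≤ ε * Real.pi ^ 2 := by
    rw [div_pow] at hsq
    rw [div_le_div_iff₀ (by positivity) (by norm_num)] at hsq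
    linarith
  have hA : Real.pi ≤ 2 * (d : ℝ) * θ := by linarith
  have hB : Real.pi ^ 2 ≤ (2 * (d : ℝ) * θ) ^ 2 := by nlinarith [hA, hπ]
  have hC : (2 * (d : ℝ) * θ) ^ 2 ≤ 4 * (d : ℝ) ^ 2 * (ε * Real.pi ^ 2 / 2) := by
    have hmono := mul_le_mul_of_nonneg_left hθsq (sq_nonneg (d : ℝ))
    calc (2 * (d : ℝ) * θ) ^ 2 = (d : ℝ) ^ 2 * (θ ^ 2 * 2) * 2 := by ring
      _ ≤ (d : ℝ) ^ 2 * (ε * Real.pi ^ 2) * 2 := by linarith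
      _ = 4 * (d : ℝ) ^ 2 * (ε * Real.pi ^ 2 / 2) := by ring
  have hG : 1 ≤ 2 * (d : ℝ) ^ 2 * ε := by
    have hF : Real.pi ^ 2 ≤ Real.pi ^ 2 * (2 * (d : ℝ) ^ 2 * ε) := by
      calc Real.pi ^ 2 ≤ 4 * (d : ℝ) ^ 2 * (ε * Real.pi ^ 2 / 2) := hB.trans hC
        _ = Real.pi ^ 2 * (2 * (d : ℝ) ^ 2 * ε) := by ring
    have hF' : Real.pi ^ 2 * 1 ≤ Real.pi ^ 2 * (2 * (d : ℝ) ^ 2 * ε) := by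
      rw [mul_one]; exact hF
    exact le_of_mul_le_mul_left hF' (by positivity)
  have hpowpos : (0 : ℝ) < (2 : ℝ) ^ (2 ^ n) := by positivity
  have hone : (2 : ℝ) ^ (2 ^ n) * ε = 1 := by
    rw [hεdef, zpow_neg, ← zpow_natCast (2 : ℝ) (2 ^ n)]
    push_cast
    field_simp
  have hreal : (2 : ℝ) ^ (2 ^ n) ≤ 2 * (d : ℝ) ^ 2 := by
    have hmul := mul_le_mul_of_nonneg_left hG hpowpos.le
    have hrw : (2 : ℝ) ^ (2 ^ n) * (2 * (d : ℝ) ^ 2 * ε) = 2 * (d : ℝ) ^ 2 := by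
      calc (2 : ℝ) ^ (2 ^ n) * (2 * (d : ℝ) ^ 2 * ε)
          = 2 * (d : ℝ) ^ 2 * ((2 : ℝ) ^ (2 ^ n) * ε) := by ring
        _ = 2 * (d : ℝ) ^ 2 := by rw [hone, mul_one]
    rw [mul_one] at hmul
    linarith
  have hnat : (2 : ℕ) ^ (2 ^ n) ≤ 2 * d ^ 2 := by
    have : ((2 ^ (2 ^ n) : ℕ) : ℝ) ≤ ((2 * d ^ 2 : ℕ) : ℝ) := by push_cast; linarith
    exact_mod_cast this
  calc (2 : ℕ) ^ (2 ^ n) ≤ 2 * d ^ 2 := hnat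
    _ ≤ 2 * D ^ 2 := Nat.mul_le_mul_left 2 (Nat.pow_le_pow_left hdD 2)

theorem sf_complexity_exponential_lower_bound :
    ∃ c : ℝ, 0 < c ∧
      ∀ (n h : ℕ) (g : ℕ → RatFunc ℝ),
        IsSFCircuit h g → Computes h g (fPoly n) → (h : ℝ) > c * 2 ^ n := by
  refine ⟨1 / 8, by norm_num, ?_⟩
  intro n h g hcirc hcomp
  have hrep : NonnegRep (fPoly n) (2 ^ h) := by
    rcases hcomp with hin | ⟨i, hi, hF⟩
    · exact (NonnegRep.input hin).mono Nat.one_le_two_pow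
    · rw [hF]
      exact (gate_rep hcirc i hi).mono (Nat.pow_le_pow_right (by norm_num) (by omega))
  obtain ⟨hD2, hDbig⟩ := key_bound n (2 ^ h) hrep
  -- from 2 ≤ 2^h : h ≥ 1
  have h1 : 1 ≤ h := by
    by_contra h0
    push_neg at h0
    interval_cases h
    norm_num at hD2
  -- from 2^(2^n) ≤ 2 * (2^h)^2 = 2^(2h+1) : 2^n ≤ 2h+1
  have hexp2 : 2 * (2 ^ h) ^ 2 = 2 ^ (2 * h + 1) := by
    rw [← pow_mul, pow_succ]
    ring
  rw [hexp2] at hDbig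
  have hexple : 2 ^ n ≤ 2 * h + 1 :=
    (Nat.pow_le_pow_iff_right (by norm_num)).1 hDbig
  -- now conclude over ℝ
  have hR : (2 : ℝ) ^ n ≤ 2 * h + 1 := by exact_mod_cast hexple
  have hhR : (1 : ℝ) ≤ h := by exact_mod_cast h1
  rcases Nat.eq_zero_or_pos n with rfl | hn
  · norm_num; linarith
  · have h2n : (2 : ℝ) ≤ 2 ^ n := by
      calc (2 : ℝ) = 2 ^ 1 := (pow_one 2).symm
        _ ≤ 2 ^ n := pow_le_pow_right₀ (by norm_num) hn
    rw [gt_iff_lt]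
    nlinarith
end

section
/- For distinct variables x₁, …, x_k, variables y₁, y₂, …, and an integer ℓ ≥ 1, the determinant of the k×k matrix with (i,j) entry ∏_{b<i}(x_j + y_b) / ∏_{a<j}(x_j − x_a), where i ranges over {ℓ, …, ℓ+k−1} and j over {1,…,k}, equals ∏_{1≤j≤k} ∏_{1≤b<ℓ} (x_j + y_b). -/
open Finset Polynomial

theorem interval_flag_minor_double (k : ℕ) (x : Fin k → ℝ) (y : ℕ → ℝ)
    (hx : Function.Injective x) (ℓ : ℕ) (hℓ : 1 ≤ ℓ) :
    Matrix.det (fun i j : Fin k =>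
        (∏ b ∈ Finset.range (ℓ - 1 + (i : ℕ)), (x j + y b)) /
          ∏ a ∈ Finset.Iio j, (x j - x a))
      = ∏ j, ∏ b ∈ Finset.range (ℓ - 1), (x j + y b) := by
  set m := ℓ - 1 with hm
  set D : Fin k → ℝ := fun j => ∏ a ∈ Finset.Iio j, (x j - x a) with hD
  set c : Fin k → ℝ := fun j => ∏ b ∈ Finset.range m, (x j + y b) with hc
  have hDne : ∀ j, D j ≠ 0 := by
    intro j
    refine Finset.prod_ne_zero_iff.2 fun a ha => sub_ne_zero.2 ?_
    intro h
    exact (Finset.mem_Iio.mp ha).ne' (hx h)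
  set p : Fin k → ℝ[X] := fun i => ∏ b ∈ Finset.range (i : ℕ), (X + C (y (m + b))) with hp
  have hpmonic : ∀ i, (p i).Monic := fun i =>
    monic_prod_of_monic _ _ fun b _ => monic_X_add_C _
  have hpdeg : ∀ i : Fin k, (p i).natDegree = (i : ℕ) := by
    intro i
    rw [hp]
    rw [natDegree_prod _ _ (fun b _ => (monic_X_add_C (y (m + b))).ne_zero)]
    simp [natDegree_X_add_C]
  have heval : ∀ (i j : Fin k), (p i).eval (x j) = ∏ b ∈ Finset.range (i : ℕ), (x j + y (m + b)) := by
    intro i j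
    simp [hp, eval_prod]
  have hentry : ∀ i j : Fin k,
      (∏ b ∈ Finset.range (m + (i : ℕ)), (x j + y b)) / D j
        = (c j / D j) * (p i).eval (x j) := by
    intro i j
    rw [Finset.prod_range_add, heval, hc, div_mul_eq_mul_div, mul_comm (c j), mul_div_assoc,
      mul_comm]
  have hmat : (fun i j : Fin k =>
        (∏ b ∈ Finset.range (m + (i : ℕ)), (x j + y b)) / D j)
      = Matrix.of fun i j => (c j / D j) * (Matrix.of fun i j : Fin k => (p i).eval (x j)) i j := by
    funext i j
    simpa using hentry i j
  rw [hmat, Matrix.det_mul_row]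
  have hdetE : (Matrix.of fun i j : Fin k => (p i).eval (x j)).det
      = (Matrix.vandermonde x).det := by
    have := Matrix.det_eval_matrixOfPolynomials_eq_det_vandermonde x p hpdeg hpmonic
    rw [this, ← Matrix.det_transpose]
    rfl
  have hV : (Matrix.vandermonde x).det = ∏ j, D j := by
    rw [Matrix.det_vandermonde, hD]
    exact Finset.prod_comm' (by
      intro i j
      simp only [Finset.mem_univ, Finset.mem_Ioi, Finset.mem_Iio, true_and, and_true])
  rw [hdetE, hV, ← Finset.prod_mul_distrib]
  exact Finset.prod_congr rfl fun j _ => div_mul_cancel₀ _ (hDne j)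
end

section
/- (Cayley–Prüfer) Let W be a finite set with a distinguished root r, and let (z_v)_{v∈W} be positive reals. In the complete directed graph on W, assign to each edge a→b the weight z_b/(Σ_{v∈W} z_v). Then the sum over all directed spanning trees rooted at r of the product of edge weights equals z_r/(Σ_{v∈W} z_v). Equivalently, Σ_{T rooted at r} ∏_{(a→b)∈T} z_b = z_r·(Σ_{v∈W} z_v)^{|W|−2}. -/
open scoped Classical
open Finset

/-- `p` is the parent function of a directed spanning tree rooted at `r`:
`r` is fixed and every vertex eventually reaches `r` by iterating `p`.
The edges of the tree are `v → p v` for `v ≠ r`. -/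
def IsRootedTree {W : Type} (r : W) (p : W → W) : Prop :=
  p r = r ∧ ∀ v, ∃ n : ℕ, p^[n] v = r


lemma binom_aux (x s : ℝ) (m : ℕ) :
    s * ∑ k ∈ range m, (m.choose k : ℝ) * x ^ k * s ^ (m - 1 - k)
      = (x + s) ^ m - x ^ m := by
  rw [Finset.mul_sum]
  have h : ∀ k ∈ range m, s * ((m.choose k : ℝ) * x ^ k * s ^ (m - 1 - k))
      = (m.choose k : ℝ) * x ^ k * s ^ (m - k) := by
    intro k hk
    rw [mem_range] at hk
    have : m - 1 - k + 1 = m - k := by omega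
    rw [← this, pow_succ]
    ring
  rw [Finset.sum_congr rfl h]
  have h2 := add_pow x s m
  rw [Finset.sum_range_succ] at h2
  simp only [Nat.sub_self, pow_zero, Nat.choose_self, Nat.cast_one, mul_one, one_mul] at h2
  have h3 : (x+s)^m - x^m = ∑ k ∈ range m, x ^ k * s ^ (m - k) * (m.choose k : ℝ) := by
    rw [h2]; ring
  rw [h3]
  exact Finset.sum_congr rfl (fun k _ => by ring)

lemma count_aux {W : Type} [DecidableEq W] (D : Finset W) (c : W) (hc : c ∈ D) (k : ℕ) :
    #((D.powersetCard (k+1)).filter (fun C => c ∈ C)) = (#D - 1).choose k := by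
  have key : #((D.powersetCard (k+1)).filter (fun C => c ∈ C))
      = #((D.erase c).powersetCard k) := by
    refine Finset.card_bij' (fun C _ => C.erase c) (fun C _ => insert c C) ?_ ?_ ?_ ?_
    · intro C hC
      rw [mem_filter, mem_powersetCard] at hC
      rw [mem_powersetCard]
      exact ⟨erase_subset_erase c hC.1.1, by rw [card_erase_of_mem hC.2, hC.1.2]; omega⟩
    · intro C hC
      rw [mem_powersetCard] at hC
      have hcC : c ∉ C := fun h => (mem_erase.mp (hC.1 h)).1 rfl
      rw [mem_filter, mem_powersetCard]
      refine ⟨⟨?_, by rw [card_insert_of_notMem hcC, hC.2]⟩, mem_insert_self _ _⟩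
      intro x hx
      rcases mem_insert.mp hx with h | h
      · exact h ▸ hc
      · exact (erase_subset _ _) (hC.1 h)
    · intro C hC
      rw [mem_filter] at hC
      exact insert_erase hC.2
    · intro C hC
      rw [mem_powersetCard] at hC
      exact erase_insert (fun h => (mem_erase.mp (hC.1 h)).1 rfl)
  rw [key, card_powersetCard, card_erase_of_mem hc]

lemma Tk_aux {W : Type} [DecidableEq W] (D : Finset W) (z : W → ℝ) (k : ℕ) :
    ∑ C ∈ D.powersetCard (k+1), ∑ c ∈ C, z c
      = ((#D - 1).choose k : ℝ) * ∑ c ∈ D, z c := by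
  have h1 : ∀ C ∈ D.powersetCard (k+1), ∑ c ∈ C, z c
      = ∑ c ∈ D, if c ∈ C then z c else 0 := by
    intro C hC
    rw [mem_powersetCard] at hC
    rw [Finset.sum_ite_mem, inter_eq_right.mpr hC.1]
  rw [Finset.sum_congr rfl h1, Finset.sum_comm]
  rw [Finset.mul_sum]
  apply Finset.sum_congr rfl
  intro c hc
  rw [← Finset.sum_filter, Finset.sum_const, count_aux D c hc k]
  simp [mul_comm]

lemma final_alg (x ZB ZD : ℝ) (hs : ZB + ZD ≠ 0) (u : ℕ) (hu : 1 ≤ u) :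
    (∑ k ∈ range u, x ^ k * ((u.choose k : ℝ) * ZB +
        (if k = 0 then 0 else ((u - 1).choose (k-1) : ℝ) * ZD)) * (ZB + ZD) ^ (u - 1 - k))
      + x ^ u
      = (x + ZB) * (x + (ZB + ZD)) ^ (u - 1) := by
  apply mul_left_cancel₀ hs
  have split : ∀ k ∈ range u, x ^ k * ((u.choose k : ℝ) * ZB +
        (if k = 0 then 0 else ((u - 1).choose (k-1) : ℝ) * ZD)) * (ZB + ZD) ^ (u - 1 - k)
      = ZB * ((u.choose k : ℝ) * x ^ k * (ZB + ZD) ^ (u-1-k))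
        + (if k = 0 then 0 else ((u - 1).choose (k-1) : ℝ) * ZD * x ^ k * (ZB + ZD) ^ (u-1-k)) := by
    intro k _
    by_cases h : k = 0
    · simp only [if_pos h]; ring
    · simp only [if_neg h]; ring
  rw [Finset.sum_congr rfl split, Finset.sum_add_distrib]
  obtain ⟨m, rfl⟩ : ∃ m, u = m + 1 := ⟨u - 1, by omega⟩
  have h2 : ∑ k ∈ range (m+1), (if k = 0 then (0:ℝ) else ((m + 1 - 1).choose (k-1) : ℝ) * ZD * x ^ k * (ZB + ZD) ^ (m + 1 - 1 - k))
      = x * ZD * ∑ j ∈ range m, ((m.choose j : ℝ) * x ^ j * (ZB + ZD) ^ (m - 1 - j)) := by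
    rw [Finset.sum_range_succ']
    have e0 : (if (0:ℕ) = 0 then (0:ℝ) else ((m + 1 - 1).choose (0-1) : ℝ) * ZD * x ^ 0 * (ZB + ZD) ^ (m + 1 - 1 - 0)) = 0 := by
      simp
    rw [e0, add_zero, Finset.mul_sum]
    apply Finset.sum_congr rfl
    intro j _
    rw [if_neg (Nat.succ_ne_zero j)]
    have e1 : m + 1 - 1 - (j+1) = m - 1 - j := by omega
    have e2 : j + 1 - 1 = j := by omega
    rw [e1, e2]
    simp only [Nat.add_sub_cancel]
    ring
  rw [h2, ← Finset.mul_sum]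
  have hb1 := binom_aux x (ZB+ZD) (m+1)
  have hb2 := binom_aux x (ZB+ZD) m
  simp only [Nat.add_sub_cancel] at hb1 ⊢
  linear_combination ZB * hb1 + x * ZD * hb2

section Aux
set_option linter.unusedSectionVars false
variable {W : Type} [Fintype W] [DecidableEq W]

/-- `p` is a forest on vertex set `V` rooted at `A ⊆ V`: it fixes everything outside
`V \ A`, and every vertex of `V` eventually reaches `A`. -/
def Forest (V A : Finset W) (p : W → W) : Prop :=
  (∀ v, v ∉ V \ A → p v = v) ∧ ∀ v ∈ V, ∃ n : ℕ, p^[n] v ∈ A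

lemma sdiff_erase_union (V A C : Finset W) {a : W} (haa : a ∈ A) :
    (V.erase a) \ (A.erase a ∪ C) = (V \ A) \ C := by
  ext x
  by_cases hxa : x = a
  · subst hxa
    simp [haa]
  · simp only [mem_sdiff, mem_erase, mem_union]
    tauto

/-- Direction I: compressing the children of `a`. -/
lemma forest_compress {V A : Finset W} (hA : A ⊆ V) {a : W} (ha : a ∈ A)
    {C : Finset W} (hC : C ⊆ V \ A) {p : W → W}
    (hp : Forest V A p) (hfilt : ∀ v ∈ V \ A, (p v = a ↔ v ∈ C)) :
    Forest (V.erase a) (A.erase a ∪ C) (fun v => if v ∈ C then v else p v) := by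
  set q : W → W := fun v => if v ∈ C then v else p v with hq
  constructor
  · intro v hv
    rw [sdiff_erase_union V A C ha] at hv
    by_cases hvC : v ∈ C
    · simp [hq, hvC]
    · have : v ∉ V \ A := by
        intro hvD
        exact hv (by rw [mem_sdiff]; exact ⟨hvD, hvC⟩)
      simp [hq, hvC, hp.1 v this]
  · have key : ∀ n : ℕ, ∀ v : W, v ≠ a → p^[n] v ∈ A → ∃ m, q^[m] v ∈ A.erase a ∪ C := by
      intro n
      induction n with
      | zero =>
        intro v hva hv
        rw [Function.iterate_zero_apply] at hv
        exact ⟨0, by rw [Function.iterate_zero_apply]; exact mem_union_left _ (mem_erase.mpr ⟨hva, hv⟩)⟩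
      | succ n ih =>
        intro v hva hv
        by_cases hvC : v ∈ C
        · exact ⟨0, by simp [mem_union, hvC]⟩
        by_cases hvA : v ∈ A
        · exact ⟨0, by simp [mem_union, mem_erase, hva, hvA]⟩
        by_cases hvD : v ∈ V \ A
        · have hpa : p v ≠ a := fun h => hvC ((hfilt v hvD).mp h)
          rw [Function.iterate_succ_apply] at hv
          obtain ⟨m, hm⟩ := ih (p v) hpa hv
          refine ⟨m + 1, ?_⟩
          rw [Function.iterate_succ_apply]
          have : q v = p v := by simp [hq, hvC]
          rwa [this]
        · have hfix : p v = v := hp.1 v hvD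
          rw [Function.iterate_succ_apply, hfix] at hv
          exact ih v hva hv
    intro v hv
    rw [mem_erase] at hv
    obtain ⟨n, hn⟩ := hp.2 v hv.2
    exact key n v hv.1 hn

/-- Direction II: re-attaching the children `C` to `a`. -/
lemma forest_expand {V A : Finset W} (hA : A ⊆ V) {a : W} (ha : a ∈ A)
    {C : Finset W} (hC : C ⊆ V \ A) {p : W → W}
    (hp : Forest (V.erase a) (A.erase a ∪ C) p) :
    Forest V A (fun v => if v ∈ C then a else p v) ∧
      (∀ v ∈ V \ A, ((if v ∈ C then a else p v) = a ↔ v ∈ C)) := by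
  set q : W → W := fun v => if v ∈ C then a else p v with hq
  have haV' : a ∉ V.erase a := fun h => (mem_erase.mp h).1 rfl
  have hpa : p a = a := hp.1 a (fun h => haV' (mem_sdiff.mp h).1)
  have haA' : a ∉ A.erase a ∪ C := by
    rw [mem_union]
    rintro (h | h)
    · exact (mem_erase.mp h).1 rfl
    · exact (mem_sdiff.mp (hC h)).2 ha
  have hDD : (V.erase a) \ (A.erase a ∪ C) = (V \ A) \ C :=
    sdiff_erase_union V A C ha
  have hpne : ∀ v ∈ (V \ A) \ C, p v ≠ a := by
    intro v hv hpv
    have hvV' : v ∈ V.erase a := by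
      rw [← hDD] at hv
      exact (mem_sdiff.mp hv).1
    obtain ⟨n, hn⟩ := hp.2 v hvV'
    rcases n with _ | n
    · rw [Function.iterate_zero_apply] at hn
      rw [← hDD] at hv
      exact (mem_sdiff.mp hv).2 hn
    · rw [Function.iterate_succ_apply, hpv, Function.iterate_fixed hpa] at hn
      exact haA' hn
  have key : ∀ n : ℕ, ∀ v : W, p^[n] v ∈ A.erase a ∪ C → ∃ m, q^[m] v ∈ A := by
    intro n
    induction n with
    | zero =>
      intro v hv
      rw [Function.iterate_zero_apply] at hv
      rcases mem_union.mp hv with h | h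
      · exact ⟨0, by simpa using (erase_subset _ _) h⟩
      · exact ⟨1, by simp [hq, h, ha]⟩
    | succ n ih =>
      intro v hv
      by_cases hvU : v ∈ A.erase a ∪ C
      · rcases mem_union.mp hvU with h | h
        · exact ⟨0, by simpa using (erase_subset _ _) h⟩
        · exact ⟨1, by simp [hq, h, ha]⟩
      · have hvC : v ∉ C := fun h => hvU (mem_union_right _ h)
        rw [Function.iterate_succ_apply] at hv
        obtain ⟨m, hm⟩ := ih (p v) hv
        refine ⟨m + 1, ?_⟩
        rw [Function.iterate_succ_apply]
        have : q v = p v := by simp [hq, hvC]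
        rwa [this]
  refine ⟨⟨?_, ?_⟩, ?_⟩
  · intro v hv
    have hvC : v ∉ C := fun h => hv (hC h)
    have hvD' : v ∉ (V.erase a) \ (A.erase a ∪ C) := by
      rw [hDD]
      intro h
      exact hv (mem_sdiff.mp h).1
    simp [hq, hvC, hp.1 v hvD']
  · intro v hvV
    by_cases hva : v = a
    · exact ⟨0, by simpa [hva] using ha⟩
    · obtain ⟨n, hn⟩ := hp.2 v (mem_erase.mpr ⟨hva, hvV⟩)
      exact key n v hn
  · intro v hv
    by_cases hvC : v ∈ C
    · simp [hq, hvC]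
    · simp only [hq, if_neg hvC]
      constructor
      · intro h
        exact absurd h (hpne v (mem_sdiff.mpr ⟨hv, hvC⟩))
      · intro h; exact absurd h hvC

lemma step (V A : Finset W) (hA : A ⊆ V) (a : W) (ha : a ∈ A) (z : W → ℝ) :
    (∑ p : W → W, if Forest V A p then ∏ v ∈ V \ A, z (p v) else 0)
  = ∑ C ∈ (V \ A).powerset, z a ^ C.card *
      (∑ p : W → W, if Forest (V.erase a) (A.erase a ∪ C) p
        then ∏ v ∈ (V \ A) \ C, z (p v) else 0) := by
  have h1 : ∀ p : W → W, (if Forest V A p then ∏ v ∈ V \ A, z (p v) else 0)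
      = ∑ C ∈ (V \ A).powerset,
          if ((V \ A).filter (fun v => p v = a) = C ∧ Forest V A p)
          then ∏ v ∈ V \ A, z (p v) else 0 := by
    intro p
    by_cases hF : Forest V A p
    · simp only [hF, and_true]
      rw [Finset.sum_ite_eq]
      simp [Finset.mem_powerset, Finset.filter_subset]
    · simp [hF]
  rw [Fintype.sum_congr _ _ h1, Finset.sum_comm]
  apply Finset.sum_congr rfl
  intro C hC
  rw [mem_powerset] at hC
  simp only [Finset.mul_sum, mul_ite, mul_zero]
  rw [← Finset.sum_filter, ← Finset.sum_filter]
  refine Finset.sum_nbij' (fun p => fun v => if v ∈ C then v else p v)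
    (fun p => fun v => if v ∈ C then a else p v) ?_ ?_ ?_ ?_ ?_
  · intro p hp
    rw [mem_filter] at hp
    obtain ⟨-, hfilt, hF⟩ := hp
    rw [mem_filter]
    refine ⟨mem_univ _, ?_⟩
    apply forest_compress hA ha hC hF
    intro v hv
    constructor
    · intro h
      rw [← hfilt]; rw [mem_filter]; exact ⟨hv, h⟩
    · intro h
      rw [← hfilt] at h; exact (mem_filter.mp h).2
  · intro p hp
    rw [mem_filter] at hp
    obtain ⟨-, hF⟩ := hp
    rw [mem_filter]
    obtain ⟨h1', h2'⟩ := forest_expand hA ha hC hF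
    refine ⟨mem_univ _, ?_, h1'⟩
    ext v
    rw [mem_filter]
    constructor
    · rintro ⟨hv, he⟩
      exact (h2' v hv).mp he
    · intro hv
      exact ⟨hC hv, (h2' v (hC hv)).mpr hv⟩
  · intro p hp
    rw [mem_filter] at hp
    obtain ⟨-, hfilt, hF⟩ := hp
    funext v
    by_cases hvC : v ∈ C
    · simp only [if_pos hvC]
      have : v ∈ (V \ A).filter (fun v => p v = a) := hfilt ▸ hvC
      exact ((mem_filter.mp this).2).symm
    · simp [hvC]
  · intro p hp
    rw [mem_filter] at hp
    obtain ⟨-, hF⟩ := hp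
    funext v
    by_cases hvC : v ∈ C
    · simp only [if_pos hvC]
      have hfix : p v = v := by
        apply hF.1
        rw [sdiff_erase_union V A C ha]
        intro hvm
        exact (mem_sdiff.mp hvm).2 hvC
      exact hfix.symm
    · simp [hvC]
  · intro p hp
    rw [mem_filter] at hp
    obtain ⟨-, hfilt, hF⟩ := hp
    have hsplit : ∏ v ∈ V \ A, z (p v)
        = (∏ v ∈ (V \ A) \ C, z (p v)) * ∏ v ∈ C, z (p v) := by
      rw [Finset.prod_sdiff hC]
    rw [hsplit]
    have hc1 : ∏ v ∈ C, z (p v) = z a ^ C.card := by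
      rw [Finset.prod_congr rfl (fun v hv => ?_), Finset.prod_const]
      have : v ∈ (V \ A).filter (fun v => p v = a) := hfilt ▸ hv
      rw [(mem_filter.mp this).2]
    have hc2 : ∏ v ∈ (V \ A) \ C, z (if v ∈ C then v else p v)
        = ∏ v ∈ (V \ A) \ C, z (p v) := by
      apply Finset.prod_congr rfl
      intro v hv
      rw [if_neg (mem_sdiff.mp hv).2]
    rw [hc1, hc2]
    ring

lemma forest_sum (z : W → ℝ) (hz : ∀ v, 0 < z v) (V : Finset W) :
    ∀ A : Finset W, A ⊆ V →
    (∑ p : W → W, if Forest V A p then ∏ v ∈ V \ A, z (p v) else 0)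
    = if V = A then 1 else (∑ a ∈ A, z a) * (∑ v ∈ V, z v) ^ (#(V \ A) - 1) := by
  induction V using Finset.strongInduction with
  | _ V ih =>
  intro A hA
  by_cases hVA : V = A
  · subst hVA
    rw [if_pos rfl]
    have hiff : ∀ p : W → W, Forest V V p ↔ p = id := by
      intro p
      constructor
      · intro h; funext v; exact h.1 v (by simp)
      · rintro rfl
        exact ⟨fun v _ => rfl, fun v hv => ⟨0, by simpa using hv⟩⟩
    calc (∑ p : W → W, if Forest V V p then ∏ v ∈ V \ V, z (p v) else 0)
        = ∑ p : W → W, if p = id then (1:ℝ) else 0 := by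
          apply Fintype.sum_congr
          intro p
          by_cases hp : Forest V V p
          · rw [if_pos hp, if_pos ((hiff p).mp hp)]
            simp [Finset.sdiff_self]
          · rw [if_neg hp, if_neg (fun h => hp ((hiff p).mpr h))]
      _ = 1 := by rw [Fintype.sum_ite_eq' id (fun _ => (1:ℝ))]
  · rw [if_neg hVA]
    have hDne : (V \ A).Nonempty := by
      rw [sdiff_nonempty]
      intro h
      exact hVA (Subset.antisymm h hA)
    by_cases hAe : A = ∅
    · subst hAe
      have hVne : V.Nonempty := by
        rw [nonempty_iff_ne_empty]; exact hVA
      have hno : ∀ p : W → W, ¬ Forest V ∅ p := by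
        intro p hp
        obtain ⟨v, hv⟩ := hVne
        obtain ⟨n, hn⟩ := hp.2 v hv
        simp at hn
      simp [hno]
    · obtain ⟨a, ha⟩ := nonempty_iff_ne_empty.mpr hAe
      have haV : a ∈ V := hA ha
      -- the basic quantities
      set x := z a with hx
      set ZB := ∑ v ∈ A.erase a, z v with hZB
      set ZD := ∑ v ∈ V \ A, z v with hZD
      set u := #(V \ A) with hu
      have hu1 : 1 ≤ u := card_pos.mpr hDne
      have hdisjBD : Disjoint (A.erase a) (V \ A) := by
        rw [disjoint_left]
        intro v hv hv'
        exact (mem_sdiff.mp hv').2 (erase_subset _ _ hv)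
      have hVerase : V.erase a = A.erase a ∪ (V \ A) := by
        ext w
        by_cases hwa : w = a
        · subst hwa; simp [ha]
        · simp only [mem_erase, mem_union, mem_sdiff]
          constructor
          · rintro ⟨-, hwV⟩
            by_cases hwA : w ∈ A
            · exact Or.inl ⟨hwa, hwA⟩
            · exact Or.inr ⟨hwV, hwA⟩
          · rintro (h | h)
            · exact ⟨hwa, hA h.2⟩
            · exact ⟨hwa, h.1⟩
      have hSV' : ∑ v ∈ V.erase a, z v = ZB + ZD := by
        rw [hVerase, Finset.sum_union hdisjBD]
      have hSV : ∑ v ∈ V, z v = x + (ZB + ZD) := by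
        rw [← Finset.add_sum_erase V z haV, hSV']
      have hSA : ∑ v ∈ A, z v = x + ZB := by
        rw [← Finset.add_sum_erase A z ha]
      -- apply the step lemma
      rw [step V A hA a ha z]
      -- rewrite inner sums via the induction hypothesis
      have hinner : ∀ C ∈ (V \ A).powerset,
          z a ^ #C * (∑ p : W → W, if Forest (V.erase a) (A.erase a ∪ C) p
              then ∏ v ∈ (V \ A) \ C, z (p v) else 0)
          = x ^ #C * (if C = V \ A then 1
              else (ZB + ∑ c ∈ C, z c) * (ZB + ZD) ^ (#((V \ A) \ C) - 1)) := by
        intro C hCp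
        rw [mem_powerset] at hCp
        have hCV' : C ⊆ V.erase a := by
          intro w hw
          exact hVerase ▸ mem_union_right _ (hCp hw)
        have hsub : A.erase a ∪ C ⊆ V.erase a :=
          union_subset (erase_subset_erase a hA) hCV'
        have hsd : (V.erase a) \ (A.erase a ∪ C) = (V \ A) \ C :=
          sdiff_erase_union V A C ha
        have hIH := ih (V.erase a) (erase_ssubset haV) (A.erase a ∪ C) hsub
        rw [hsd] at hIH
        rw [hIH]
        have hcond : V.erase a = A.erase a ∪ C ↔ C = V \ A := by
          constructor
          · intro h
            refine Subset.antisymm hCp ?_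
            intro w hw
            have hw' : w ∈ V.erase a := by
              refine mem_erase.mpr ⟨?_, (mem_sdiff.mp hw).1⟩
              intro hwa
              exact (mem_sdiff.mp hw).2 (hwa ▸ ha)
            rw [h] at hw'
            rcases mem_union.mp hw' with h' | h'
            · exact absurd ((erase_subset _ _) h') (mem_sdiff.mp hw).2
            · exact h'
          · rintro rfl
            exact hVerase
        have hdisjBC : Disjoint (A.erase a) C := by
          rw [disjoint_left]
          intro w hw hw'
          exact (mem_sdiff.mp (hCp hw')).2 (erase_subset _ _ hw)
        by_cases hCD : C = V \ A
        · rw [if_pos ((hcond).mpr hCD), if_pos hCD]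
        · rw [if_neg (fun h => hCD (hcond.mp h)), if_neg hCD,
            Finset.sum_union hdisjBC, hSV']
      rw [Finset.sum_congr rfl hinner]
      -- now a purely algebraic computation over the powerset
      rw [Finset.sum_powerset, Finset.sum_range_succ]
      rw [← hu, powersetCard_self, Finset.sum_singleton, if_pos rfl, mul_one, ← hu]
      have hmain : ∀ j ∈ range u,
          (∑ C ∈ (V \ A).powersetCard j, x ^ #C * (if C = V \ A then 1
              else (ZB + ∑ c ∈ C, z c) * (ZB + ZD) ^ (#((V \ A) \ C) - 1)))
          = x ^ j * ((u.choose j : ℝ) * ZB +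
              (if j = 0 then 0 else ((u - 1).choose (j-1) : ℝ) * ZD)) * (ZB + ZD) ^ (u - 1 - j) := by
        intro j hj
        rw [mem_range] at hj
        have hcongr : ∀ C ∈ (V \ A).powersetCard j,
            x ^ #C * (if C = V \ A then 1
              else (ZB + ∑ c ∈ C, z c) * (ZB + ZD) ^ (#((V \ A) \ C) - 1))
            = x ^ j * ZB * (ZB + ZD) ^ (u - 1 - j)
              + (x ^ j * (ZB + ZD) ^ (u - 1 - j)) * ∑ c ∈ C, z c := by
          intro C hC
          rw [mem_powersetCard] at hC
          have hCD : C ≠ V \ A := by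
            intro h
            rw [h] at hC
            omega
          have hcard : #((V \ A) \ C) - 1 = u - 1 - j := by
            rw [card_sdiff_of_subset hC.1, hC.2]
            omega
          rw [if_neg hCD, hC.2, hcard]
          ring
        rw [Finset.sum_congr rfl hcongr, Finset.sum_add_distrib, Finset.sum_const,
          card_powersetCard, ← Finset.mul_sum]
        rcases Nat.eq_zero_or_pos j with hj0 | hjpos
        · subst hj0
          rw [if_pos rfl]
          simp [Finset.powersetCard_zero]
        · obtain ⟨k, rfl⟩ : ∃ k, j = k + 1 := ⟨j - 1, by omega⟩
          rw [if_neg (Nat.succ_ne_zero k), Tk_aux, ← hu]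
          simp only [Nat.add_sub_cancel]
          push_cast
          ring
      rw [Finset.sum_congr rfl hmain]
      rw [hSA, hSV]
      have hZBpos : 0 ≤ ZB := Finset.sum_nonneg (fun v _ => (hz v).le)
      have hZDpos : 0 < ZD := Finset.sum_pos (fun v _ => hz v) hDne
      have hs : ZB + ZD ≠ 0 := by positivity
      exact final_alg x ZB ZD hs u hu1

end Aux

theorem cayley_prufer (W : Type) [Fintype W] [DecidableEq W] (r : W)
    (z : W → ℝ) (hz : ∀ v, 0 < z v) :
    (∑ p : W → W, if IsRootedTree r p then
        ∏ v ∈ Finset.univ.erase r, (z (p v) / ∑ u, z u) else 0)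
      = z r / ∑ u, z u
    ∧ (2 ≤ Fintype.card W →
      (∑ p : W → W, if IsRootedTree r p then ∏ v ∈ Finset.univ.erase r, z (p v) else 0)
        = z r * (∑ u, z u) ^ (Fintype.card W - 2)) := by
  have hNe : Nonempty W := ⟨r⟩
  have hS : 0 < ∑ u, z u := Finset.sum_pos (fun v _ => hz v) univ_nonempty
  have hErase : (univ : Finset W) \ {r} = univ.erase r := (Finset.erase_eq univ r).symm
  have hiff : ∀ p : W → W, Forest (univ : Finset W) {r} p ↔ IsRootedTree r p := by
    intro p
    constructor
    · intro h
      refine ⟨h.1 r (by simp), fun v => ?_⟩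
      obtain ⟨n, hn⟩ := h.2 v (mem_univ v)
      exact ⟨n, by simpa using hn⟩
    · intro h
      refine ⟨fun v hv => ?_, fun v _ => ?_⟩
      · have hv' : v = r := by simpa using hv
        rw [hv']; exact h.1
      · obtain ⟨n, hn⟩ := h.2 v
        exact ⟨n, by simp [hn]⟩
  have hF := forest_sum z hz univ {r} (subset_univ _)
  rw [hErase, Finset.sum_singleton] at hF
  have hFmain : (∑ p : W → W, if IsRootedTree r p then
      ∏ v ∈ Finset.univ.erase r, z (p v) else 0)
      = if (univ : Finset W) = {r} then 1
        else z r * (∑ u, z u) ^ (#(univ.erase r) - 1) := by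
    rw [← hF]
    apply Fintype.sum_congr
    intro p
    exact if_congr (hiff p).symm rfl rfl
  have hcard : #(Finset.univ.erase r) = Fintype.card W - 1 := by
    rw [card_erase_of_mem (mem_univ r), card_univ]
  constructor
  · have hprod : ∀ p : W → W,
        (if IsRootedTree r p then ∏ v ∈ Finset.univ.erase r, (z (p v) / ∑ u, z u) else 0)
        = (if IsRootedTree r p then ∏ v ∈ Finset.univ.erase r, z (p v) else 0)
            / (∑ u, z u) ^ (#(Finset.univ.erase r)) := by
      intro p
      by_cases hp : IsRootedTree r p
      · rw [if_pos hp, if_pos hp, Finset.prod_div_distrib, Finset.prod_const]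
      · rw [if_neg hp, if_neg hp, zero_div]
    rw [Fintype.sum_congr _ _ hprod, ← Finset.sum_div, hFmain]
    by_cases h1 : (univ : Finset W) = {r}
    · rw [if_pos h1]
      have hz' : (∑ u, z u) = z r := by rw [h1, Finset.sum_singleton]
      have hc0 : #(Finset.univ.erase r) = 0 := by
        rw [Finset.card_eq_zero, ← hErase, h1, sdiff_self]
        rfl
      rw [hc0, pow_zero, hz', div_self (hz r).ne']
      norm_num
    · rw [if_neg h1]
      have hlt : 1 < Fintype.card W := by
        have hss : ({r} : Finset W) ⊂ univ :=
          Finset.ssubset_iff_subset_ne.mpr ⟨subset_univ _, fun h => h1 h.symm⟩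
        simpa using Finset.card_lt_card hss
      obtain ⟨k, hk⟩ : ∃ k, #(Finset.univ.erase r) = k + 1 := ⟨Fintype.card W - 2, by rw [hcard]; omega⟩
      rw [hk]
      simp only [Nat.add_sub_cancel]
      rw [pow_succ']
      exact mul_div_mul_right _ _ (pow_ne_zero _ hS.ne')
  · intro h2
    have h1 : (univ : Finset W) ≠ {r} := by
      intro h
      have := Finset.card_univ (α := W) ▸ congrArg Finset.card h
      rw [Finset.card_singleton] at this
      omega
    rw [hFmain, if_neg h1, hcard]
    have : Fintype.card W - 1 - 1 = Fintype.card W - 2 := by omega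
    rw [this]
end
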